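/- Let a_k/b_k, a/b and a_l/b_l be fractions in the Farey sequence of order n (with indices k ≤ l) satisfying a_k/b_k ≤ a/b ≤ a_l/b_l. If l − k ≤ (n + b + 1)/(2b), then a_k/b_k and a_l/b_l are similarly ordered. -/

import Mathlib

/-- The Farey fractions of order `n`: the rationals in `[0,1]` whose (reduced) denominator
is at most `n`. -/
def fareySet (n : ℕ) : Finset ℚ :=
  ((Finset.range (n + 1) ×ˢ Finset.range (n + 1)).image fun p => (p.1 : ℚ) / (p.2 : ℚ)).filter
    fun q => 0 ≤ q ∧ q ≤ 1 ∧ q.den ≤ n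

/-- The Farey sequence of order `n`: the Farey fractions of order `n` listed in
increasing order. -/
def fareyList (n : ℕ) : List ℚ := (fareySet n).sort (· ≤ ·)

/-- Two reduced fractions `q = a/b` and `q' = a'/b'` are similarly ordered if
`(a' - a) * (b' - b) ≥ 0`. -/
def SimilarlyOrdered (q q' : ℚ) : Prop :=
  0 ≤ (q'.num - q.num) * ((q'.den : ℤ) - (q.den : ℤ))

lemma num_le_den_of_le_one {q : ℚ} (h0 : 0 ≤ q) (h1 : q ≤ 1) : q.num ≤ (q.den : ℤ) := by
  have hd : (0:ℚ) < (q.den : ℚ) := by exact_mod_cast q.pos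
  have h : (q.num : ℚ) ≤ (q.den : ℚ) := by
    rw [← Rat.num_div_den q] at h1
    exact (div_le_one hd).mp h1
  exact_mod_cast h

lemma mem_fareySet_iff {n : ℕ} {q : ℚ} :
    q ∈ fareySet n ↔ 0 ≤ q ∧ q ≤ 1 ∧ q.den ≤ n := by
  unfold fareySet
  rw [Finset.mem_filter]
  constructor
  · rintro ⟨-, h⟩; exact h
  · rintro ⟨h0, h1, hd⟩
    have hnn : 0 ≤ q.num := Rat.num_nonneg.mpr h0
    have hnum : q.num ≤ (q.den : ℤ) := num_le_den_of_le_one h0 h1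
    refine ⟨Finset.mem_image.mpr ⟨(q.num.toNat, q.den), ?_, ?_⟩, h0, h1, hd⟩
    · rw [Finset.mem_product, Finset.mem_range, Finset.mem_range]
      constructor <;> simp <;> omega
    · show ((q.num.toNat : ℚ)) / (q.den : ℚ) = q
      rw [show ((q.num.toNat : ℚ)) = ((q.num.toNat : ℤ) : ℚ) by push_cast; ring,
        Int.toNat_of_nonneg hnn, Rat.num_div_den]

lemma rat_sub_eq (u w : ℚ) :
    w - u = ((w.num * u.den - u.num * w.den : ℤ) : ℚ) / ((w.den : ℚ) * (u.den : ℚ)) := by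
  have hu : (u.den : ℚ) ≠ 0 := by exact_mod_cast u.den_nz -- guess
  have hw : (w.den : ℚ) ≠ 0 := by exact_mod_cast w.den_nz
  conv_lhs => rw [← Rat.num_div_den w, ← Rat.num_div_den u]
  push_cast
  field_simp

lemma det_pos_of_lt {u w : ℚ} (h : u < w) : 1 ≤ w.num * u.den - u.num * w.den := by
  have hd : (0:ℚ) < (w.den : ℚ) * (u.den : ℚ) := by
    have := u.pos; have := w.pos; positivity
  have h2 : (0:ℚ) < ((w.num * u.den - u.num * w.den : ℤ) : ℚ) / ((w.den : ℚ) * (u.den : ℚ)) := by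
    rw [← rat_sub_eq]; linarith
  have h3 : (0:ℚ) < ((w.num * u.den - u.num * w.den : ℤ) : ℚ) := by
    by_contra hc
    push_neg at hc
    nlinarith [div_nonpos_of_nonpos_of_nonneg hc hd.le]
  have : (0:ℤ) < w.num * u.den - u.num * w.den := by exact_mod_cast h3
  omega

lemma sub_ge_one_div {u w : ℚ} (h : u < w) :
    1 / ((w.den : ℚ) * (u.den : ℚ)) ≤ w - u := by
  rw [rat_sub_eq u w]
  have hd : (0:ℚ) < (w.den : ℚ) * (u.den : ℚ) := by
    have := u.pos; have := w.pos; positivity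
  gcongr
  exact_mod_cast det_pos_of_lt h

lemma no_between {n : ℕ} {u v w : ℚ} (hdet : v.num * u.den - u.num * v.den = 1)
    (hsum : (n : ℤ) < u.den + v.den) (hw : w.den ≤ n) (h1 : u < w) (h2 : w < v) : False := by
  have hvu : v - u = 1 / ((v.den : ℚ) * (u.den : ℚ)) := by
    rw [rat_sub_eq u v, hdet]; norm_num
  have g1 := sub_ge_one_div h1
  have g2 := sub_ge_one_div h2
  have hdu : (0:ℚ) < (u.den : ℚ) := by exact_mod_cast u.pos
  have hdv : (0:ℚ) < (v.den : ℚ) := by exact_mod_cast v.pos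
  have hdw : (0:ℚ) < (w.den : ℚ) := by exact_mod_cast w.pos
  have hwn : (w.den:ℚ) ≤ (n : ℚ) := by exact_mod_cast hw
  have hsn : (n : ℚ) < (u.den:ℚ) + (v.den:ℚ) := by exact_mod_cast hsum
  set du := (u.den : ℚ)
  set dv := (v.den : ℚ)
  set dw := (w.den : ℚ)
  have key : du + dv ≤ dw := by
    have hineq : 1 / (dw * du) + 1 / (dv * dw) ≤ 1 / (dv * du) := by linarith
    rw [div_add_div _ _ (by positivity) (by positivity), div_le_div_iff₀ (by positivity) (by positivity)] at hineq
    nlinarith [mul_pos (mul_pos hdv hdu) hdw]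
  linarith

lemma mem_fareyList {n : ℕ} {q : ℚ} : q ∈ fareyList n ↔ q ∈ fareySet n :=
  Finset.mem_sort _

lemma farey_get_strictMono {n : ℕ} : StrictMono (fareyList n).get :=
  ((fareySet n).sortedLT_sort).strictMono_get

lemma farey_get_mem {n : ℕ} (i : Fin (fareyList n).length) :
    (fareyList n).get i ∈ fareySet n :=
  mem_fareyList.mp (List.get_mem _ i)

lemma get_succ_eq {n : ℕ} {i : ℕ} (hi : i + 1 < (fareyList n).length) {v : ℚ}
    (hv : v ∈ fareySet n)
    (hlt : (fareyList n).get ⟨i, by omega⟩ < v)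
    (hnb : ∀ w ∈ fareySet n, (fareyList n).get ⟨i, by omega⟩ < w → w < v → False) :
    (fareyList n).get ⟨i + 1, hi⟩ = v := by
  obtain ⟨m, hm⟩ := List.mem_iff_get.mp (mem_fareyList.mpr hv)
  have him : (⟨i, by omega⟩ : Fin (fareyList n).length) < m := by
    by_contra hc
    push_neg at hc
    exact absurd (farey_get_strictMono.le_iff_le.mpr hc) (by rw [hm]; exact not_le.mpr hlt)
  have him' : i < (m : ℕ) := by simpa [Fin.lt_def] using him
  have h1 : (fareyList n).get ⟨i + 1, hi⟩ ≤ v := by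
    rw [← hm]
    apply farey_get_strictMono.le_iff_le.mpr
    rw [Fin.le_def]
    simpa using him'
  rcases lt_or_eq_of_le h1 with h | h
  · exact absurd h (fun hh => hnb _ (farey_get_mem _)
      (farey_get_strictMono (Fin.mk_lt_mk.mpr (by omega))) hh)
  · exact h

lemma get_pred_eq {n : ℕ} {i : ℕ} (hi : i + 1 < (fareyList n).length) {u : ℚ}
    (hu : u ∈ fareySet n)
    (hlt : u < (fareyList n).get ⟨i + 1, hi⟩)
    (hnb : ∀ w ∈ fareySet n, u < w → w < (fareyList n).get ⟨i + 1, hi⟩ → False) :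
    (fareyList n).get ⟨i, by omega⟩ = u := by
  obtain ⟨m, hm⟩ := List.mem_iff_get.mp (mem_fareyList.mpr hu)
  have him : m < (⟨i + 1, hi⟩ : Fin (fareyList n).length) := by
    by_contra hc
    push_neg at hc
    exact absurd (farey_get_strictMono.le_iff_le.mpr hc) (by rw [hm]; exact not_le.mpr hlt)
  have him' : (m : ℕ) < i + 1 := by simpa [Fin.lt_def] using him
  have h1 : u ≤ (fareyList n).get ⟨i, by omega⟩ := by
    rw [← hm]
    apply farey_get_strictMono.le_iff_le.mpr
    rw [Fin.le_def]
    simpa using Nat.lt_succ_iff.mp him'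
  rcases lt_or_eq_of_le h1 with h | h
  · exact absurd h (fun hh => hnb _ (farey_get_mem _) hh
      (farey_get_strictMono (Fin.mk_lt_mk.mpr (by omega))))
  · exact h.symm

lemma num_den_div {N D x y : ℤ} (hD : 0 < D) (h : x * N + y * D = 1) :
    ((N : ℚ) / (D : ℚ)).num = N ∧ (((N : ℚ) / (D : ℚ)).den : ℤ) = D := by
  have hco : IsCoprime N D := ⟨x, y, by linarith⟩
  have hco' : Nat.Coprime N.natAbs D.natAbs := Int.isCoprime_iff_gcd_eq_one.mp hco
  exact ⟨Rat.num_div_eq_of_coprime hD hco', Rat.den_div_eq_of_coprime hD hco'⟩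

lemma num_lt_den_of_lt_one {q : ℚ} (h1 : q < 1) : q.num < (q.den : ℤ) := by
  have hd : (0:ℚ) < (q.den : ℚ) := by exact_mod_cast q.pos
  have h : (q.num : ℚ) < (q.den : ℚ) := by
    rw [← Rat.num_div_den q] at h1
    exact (div_lt_one hd).mp h1
  exact_mod_cast h

lemma exists_parent {a b e : ℤ} (ha : 0 ≤ a) (hab : a ≤ b) (hb : 1 ≤ b)
    (hco : Nat.Coprime a.natAbs b.natAbs)
    (he : (e = 1 ∧ a < b) ∨ (e = -1 ∧ 1 ≤ a)) :
    ∃ α β : ℤ, α * b - a * β = e ∧ 1 ≤ β ∧ β ≤ b ∧ 0 ≤ α ∧ α ≤ β := by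
  have hIco : IsCoprime a b := Int.isCoprime_iff_gcd_eq_one.mpr hco
  obtain ⟨u, v, huv⟩ := hIco
  -- u * a + v * b = 1
  set β₀ : ℤ := -e * u with hβ₀
  have hb0 : b ≠ 0 := by omega
  set β : ℤ := (β₀ - 1) % b + 1 with hβ
  have hmod1 : 0 ≤ (β₀ - 1) % b := Int.emod_nonneg _ hb0
  have hmod2 : (β₀ - 1) % b < b := Int.emod_lt_of_pos _ (by omega)
  have hβ1 : 1 ≤ β := by omega
  have hβb : β ≤ b := by omega
  have hdvd0 : β - β₀ = b * (-((β₀ - 1) / b)) := by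
    rw [hβ, Int.emod_def]; ring
  have hdvd : b ∣ e + a * β := by
    refine ⟨e * v + a * (-((β₀ - 1) / b)), ?_⟩
    have h1 : e + a * β₀ = b * (e * v) := by
      rw [hβ₀]; linear_combination (-e) * huv
    linear_combination h1 + a * hdvd0
  set α : ℤ := (e + a * β) / b with hα
  have hαb : α * b = e + a * β := by
    rw [hα, mul_comm]
    exact (Int.mul_ediv_cancel' hdvd)
  refine ⟨α, β, by linarith, hβ1, hβb, ?_, ?_⟩
  · -- 0 ≤ α
    have haβ : 0 ≤ a * β := mul_nonneg ha (by omega)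
    rcases he with ⟨he1, -⟩ | ⟨he1, ha1⟩
    · nlinarith
    · have : 1 ≤ a * β := by nlinarith
      nlinarith
  · -- α ≤ β
    rcases he with ⟨he1, hab'⟩ | ⟨he1, ha1⟩
    · nlinarith
    · nlinarith

lemma div_mem_fareySet {n : ℕ} {N D : ℤ} (hD : 0 < D) (hN : 0 ≤ N) (hND : N ≤ D)
    (hDn : D ≤ (n : ℤ)) (hco : ∃ x y : ℤ, x * N + y * D = 1) :
    (N : ℚ) / (D : ℚ) ∈ fareySet n := by
  obtain ⟨x, y, hxy⟩ := hco
  have hDq : (0:ℚ) < (D : ℚ) := by exact_mod_cast hD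
  rw [mem_fareySet_iff]
  refine ⟨div_nonneg (by exact_mod_cast hN) hDq.le, ?_, ?_⟩
  · rw [div_le_one hDq]; exact_mod_cast hND
  · have hden := (num_den_div hD hxy).2
    omega

lemma step_succ {n : ℕ} {i : ℕ} (hi : i + 1 < (fareyList n).length)
    {N1 D1 N2 D2 : ℤ}
    (h1 : (fareyList n).get ⟨i, by omega⟩ = (N1 : ℚ) / (D1 : ℚ))
    (hD1 : 0 < D1) (hD2 : 0 < D2) (hN2 : 0 ≤ N2)
    (h1co : ∃ x y : ℤ, x * N1 + y * D1 = 1) (h2co : ∃ x y : ℤ, x * N2 + y * D2 = 1)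
    (hle2 : N2 ≤ D2) (hD2n : D2 ≤ (n : ℤ))
    (hdet : N2 * D1 - N1 * D2 = 1) (hsum : (n : ℤ) < D1 + D2) :
    (fareyList n).get ⟨i + 1, hi⟩ = (N2 : ℚ) / (D2 : ℚ) := by
  obtain ⟨x1, y1, hxy1⟩ := h1co
  obtain ⟨x2, y2, hxy2⟩ := h2co
  have hq1 : (0:ℚ) < (D1 : ℚ) := by exact_mod_cast hD1
  have hq2 : (0:ℚ) < (D2 : ℚ) := by exact_mod_cast hD2
  have hnum1 := (num_den_div hD1 hxy1).1
  have hden1 := (num_den_div hD1 hxy1).2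
  have hnum2 := (num_den_div hD2 hxy2).1
  have hden2 := (num_den_div hD2 hxy2).2
  have hlt : (N1 : ℚ) / (D1 : ℚ) < (N2 : ℚ) / (D2 : ℚ) := by
    rw [div_lt_div_iff₀ hq1 hq2]
    have : N1 * D2 < N2 * D1 := by omega
    exact_mod_cast this
  have hmem : (N2 : ℚ) / (D2 : ℚ) ∈ fareySet n :=
    div_mem_fareySet hD2 hN2 hle2 hD2n ⟨x2, y2, hxy2⟩
  apply get_succ_eq hi hmem (by rw [h1]; exact hlt)
  intro w hw hw1 hw2
  rw [h1] at hw1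
  refine no_between (u := (N1 : ℚ) / (D1 : ℚ)) (v := (N2 : ℚ) / (D2 : ℚ)) ?_ ?_
    (mem_fareySet_iff.mp hw).2.2 hw1 hw2
  · rw [hnum1, hnum2, hden1, hden2]; exact hdet
  · rw [hden1, hden2]; exact hsum

lemma step_pred {n : ℕ} {i : ℕ} (hi : i + 1 < (fareyList n).length)
    {N1 D1 N2 D2 : ℤ}
    (h1 : (fareyList n).get ⟨i + 1, hi⟩ = (N1 : ℚ) / (D1 : ℚ))
    (hD1 : 0 < D1) (hD2 : 0 < D2) (hN2 : 0 ≤ N2)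
    (h1co : ∃ x y : ℤ, x * N1 + y * D1 = 1) (h2co : ∃ x y : ℤ, x * N2 + y * D2 = 1)
    (hle2 : N2 ≤ D2) (hD2n : D2 ≤ (n : ℤ))
    (hdet : N1 * D2 - N2 * D1 = 1) (hsum : (n : ℤ) < D1 + D2) :
    (fareyList n).get ⟨i, by omega⟩ = (N2 : ℚ) / (D2 : ℚ) := by
  obtain ⟨x1, y1, hxy1⟩ := h1co
  obtain ⟨x2, y2, hxy2⟩ := h2co
  have hq1 : (0:ℚ) < (D1 : ℚ) := by exact_mod_cast hD1
  have hq2 : (0:ℚ) < (D2 : ℚ) := by exact_mod_cast hD2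
  have hnum1 := (num_den_div hD1 hxy1).1
  have hden1 := (num_den_div hD1 hxy1).2
  have hnum2 := (num_den_div hD2 hxy2).1
  have hden2 := (num_den_div hD2 hxy2).2
  have hlt : (N2 : ℚ) / (D2 : ℚ) < (N1 : ℚ) / (D1 : ℚ) := by
    rw [div_lt_div_iff₀ hq2 hq1]
    have : N2 * D1 < N1 * D2 := by omega
    exact_mod_cast this
  have hmem : (N2 : ℚ) / (D2 : ℚ) ∈ fareySet n :=
    div_mem_fareySet hD2 hN2 hle2 hD2n ⟨x2, y2, hxy2⟩
  apply get_pred_eq hi hmem (by rw [h1]; exact hlt)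
  intro w hw hw1 hw2
  rw [h1] at hw2
  refine no_between (u := (N2 : ℚ) / (D2 : ℚ)) (v := (N1 : ℚ) / (D1 : ℚ)) ?_ ?_
    (mem_fareySet_iff.mp hw).2.2 hw1 hw2
  · rw [hnum1, hnum2, hden1, hden2]; exact hdet
  · rw [hden1, hden2]; omega

set_option maxHeartbeats 1000000 in
lemma chainR {n : ℕ} {q : ℚ} (hq : q ∈ fareySet n) {j T : ℕ} (hT : 1 ≤ T)
    (hjT : j + T < (fareyList n).length)
    (hgetj : (fareyList n).get ⟨j, by omega⟩ = q)
    (hq1 : q < 1)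
    (hbound : 2 * (q.den : ℤ) * (T : ℤ) ≤ (n : ℤ) + (q.den : ℤ) + 1) :
    ((fareyList n).get ⟨j + T, hjT⟩).num * (q.den : ℤ)
      - q.num * ((fareyList n).get ⟨j + T, hjT⟩).den = 1 := by
  obtain ⟨hq0, hq1', hqden⟩ := mem_fareySet_iff.mp hq
  have ha' : 0 ≤ q.num := Rat.num_nonneg.mpr hq0
  have hb' : 1 ≤ (q.den : ℤ) := by have := q.pos; omega
  have hab' : q.num < (q.den : ℤ) := num_lt_den_of_lt_one hq1
  have hbn' : (q.den : ℤ) ≤ (n : ℤ) := by exact_mod_cast hqden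
  set a : ℤ := q.num with haq
  set b : ℤ := (q.den : ℤ) with hbq
  have ha : 0 ≤ a := ha'
  have hb : 1 ≤ b := hb'
  have hab : a < b := hab'
  have hbn : b ≤ (n : ℤ) := hbn'
  have hco : a.natAbs.Coprime b.natAbs := by
    simpa [haq, hbq] using q.reduced
  obtain ⟨α, β, hαβ, hβ1, hβb, hα0, hαβ'⟩ :=
    exists_parent ha hab.le hb hco (Or.inl ⟨rfl, hab⟩)
  set K : ℤ := ((n : ℤ) - β) / b with hK
  have hKe := Int.mul_ediv_add_emod ((n : ℤ) - β) b
  rw [← hK] at hKe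
  have hKr1 : 0 ≤ ((n : ℤ) - β) % b := Int.emod_nonneg _ (by omega)
  have hKr2 : ((n : ℤ) - β) % b < b := Int.emod_lt_of_pos _ (by omega)
  have hK1 : b * K + β ≤ (n : ℤ) := by omega
  have hK2 : (n : ℤ) + 1 ≤ b * K + b + β := by omega
  have hbT : b * (T : ℤ) ≤ (n : ℤ) := by
    have h1 : 2 * (b * (T : ℤ)) < 2 * ((n : ℤ) + 1) := by linarith
    have h2 : b * (T : ℤ) < (n : ℤ) + 1 := by linarith
    omega
  have hbt : ∀ t : ℕ, t ≤ T → b * (t : ℤ) ≤ (n : ℤ) := by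
    intro t ht
    have : b * (t : ℤ) ≤ b * (T : ℤ) :=
      mul_le_mul_of_nonneg_left (by exact_mod_cast ht) (by linarith)
    linarith
  have hκpos : ∀ t : ℤ, 0 < b * t + β → 0 ≤ t := by
    intro t h
    by_contra hc
    push_neg at hc
    have h2 : t ≤ -1 := by omega
    have h3 : b * t ≤ b * (-1) := mul_le_mul_of_nonneg_left h2 (by linarith)
    linarith
  have main : ∀ t : ℕ, 1 ≤ t → t ≤ T → ∀ h : j + t < (fareyList n).length,
      (fareyList n).get ⟨j + t, h⟩
        = ((a * (K - (t : ℤ) + 1) + α : ℤ) : ℚ) / ((b * (K - (t : ℤ) + 1) + β : ℤ) : ℚ) := by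
    intro t
    induction t with
    | zero => omega
    | succ t ih =>
      intro h1 hle h
      have hc : ((t + 1 : ℕ) : ℤ) = (t : ℤ) + 1 := by push_cast; ring
      rw [hc]
      have hbt1 : b * ((t : ℤ) + 1) ≤ (n : ℤ) := by
        have := hbt (t + 1) hle
        push_cast at this
        linarith
      have hDlb : (n : ℤ) + 1 - b * ((t : ℤ) + 1) ≤ b * (K - ((t : ℤ) + 1) + 1) + β := by
        linarith [hK2]
      have hD2pos : 0 < b * (K - ((t : ℤ) + 1) + 1) + β := by linarith
      have hκ : 0 ≤ K - ((t : ℤ) + 1) + 1 := hκpos _ hD2pos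
      have hN2 : 0 ≤ a * (K - ((t : ℤ) + 1) + 1) + α := by
        have := mul_nonneg ha hκ
        linarith
      have hle2 : a * (K - ((t : ℤ) + 1) + 1) + α ≤ b * (K - ((t : ℤ) + 1) + 1) + β := by
        have := mul_le_mul_of_nonneg_right hab.le hκ
        linarith
      have hD2n : b * (K - ((t : ℤ) + 1) + 1) + β ≤ (n : ℤ) := by
        have hp : 0 ≤ b * (t : ℤ) := mul_nonneg (by linarith) (by positivity)
        linarith [hK1]
      have hco2 : ∃ x y : ℤ, x * (a * (K - ((t : ℤ) + 1) + 1) + α)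
          + y * (b * (K - ((t : ℤ) + 1) + 1) + β) = 1 :=
        ⟨b, -a, by linear_combination hαβ⟩
      rcases Nat.eq_or_lt_of_le h1 with heq | hlt1
      · have ht0 : t = 0 := by omega
        subst ht0
        have hgetj' : (fareyList n).get ⟨j, by omega⟩ = ((a : ℚ)) / ((b : ℚ)) := by
          rw [hgetj, haq, hbq]
          push_cast
          exact (Rat.num_div_den q).symm
        refine step_succ h (N1 := a) (D1 := b) hgetj' (by omega) hD2pos hN2
          ⟨-β, α, by linear_combination hαβ⟩ hco2 hle2 hD2n ?_ ?_
        · linear_combination hαβ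
        · push_cast
          linarith [hK2]
      · have ht1 : 1 ≤ t := by omega
        have hprev := ih ht1 (by omega) (by omega)
        have hD1pos : 0 < b * (K - (t : ℤ) + 1) + β := by
          have h5 : b * (t : ℤ) ≤ (n : ℤ) := hbt t (by omega)
          linarith [hK2]
        have hco1 : ∃ x y : ℤ, x * (a * (K - (t : ℤ) + 1) + α)
            + y * (b * (K - (t : ℤ) + 1) + β) = 1 :=
          ⟨b, -a, by linear_combination hαβ⟩
        have hmul : b * ((t : ℤ) + 1) ≤ b * (T : ℤ) := by
          have h6 : ((t + 1 : ℕ) : ℤ) ≤ (T : ℤ) := by exact_mod_cast hle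
          push_cast at h6
          exact mul_le_mul_of_nonneg_left (by linarith) (by linarith)
        have hsum : (n : ℤ) < (b * (K - (t : ℤ) + 1) + β)
            + (b * (K - ((t : ℤ) + 1) + 1) + β) := by
          linarith [hK2, hbound, hmul]
        refine step_succ h hprev hD1pos hD2pos hN2 hco1 hco2 hle2 hD2n ?_ hsum
        linear_combination hαβ
  have hfin := main T hT le_rfl hjT
  have hD : 0 < b * (K - (T : ℤ) + 1) + β := by
    linarith [hK2, hbT]
  have hxy : b * (a * (K - (T : ℤ) + 1) + α) + (-a) * (b * (K - (T : ℤ) + 1) + β) = 1 := by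
    linear_combination hαβ
  rw [hfin, (num_den_div hD hxy).1, (num_den_div hD hxy).2]
  linear_combination hαβ

set_option maxHeartbeats 1000000 in
lemma chainL {n : ℕ} {q : ℚ} (hq : q ∈ fareySet n) {j T : ℕ} (hT : 1 ≤ T) (hTj : T ≤ j)
    (hj : j < (fareyList n).length)
    (hgetj : (fareyList n).get ⟨j, hj⟩ = q)
    (hq0 : 0 < q)
    (hbound : 2 * (q.den : ℤ) * (T : ℤ) ≤ (n : ℤ) + (q.den : ℤ) + 1) :
    q.num * ((fareyList n).get ⟨j - T, by omega⟩).den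
      - ((fareyList n).get ⟨j - T, by omega⟩).num * (q.den : ℤ) = 1 := by
  obtain ⟨hq0', hq1', hqden⟩ := mem_fareySet_iff.mp hq
  have ha' : 1 ≤ q.num := Rat.num_pos.mpr hq0
  have hb' : 1 ≤ (q.den : ℤ) := by have := q.pos; omega
  have hab' : q.num ≤ (q.den : ℤ) := num_le_den_of_le_one hq0' hq1'
  have hbn' : (q.den : ℤ) ≤ (n : ℤ) := by exact_mod_cast hqden
  set a : ℤ := q.num with haq
  set b : ℤ := (q.den : ℤ) with hbq
  have ha : 1 ≤ a := ha'
  have hb : 1 ≤ b := hb'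
  have hab : a ≤ b := hab'
  have hbn : b ≤ (n : ℤ) := hbn'
  have hco : a.natAbs.Coprime b.natAbs := by
    simpa [haq, hbq] using q.reduced
  obtain ⟨α, β, hαβ, hβ1, hβb, hα0, hαβ'⟩ :=
    exists_parent (by omega) hab hb hco (Or.inr ⟨rfl, ha⟩)
  set K : ℤ := ((n : ℤ) - β) / b with hK
  have hKe := Int.mul_ediv_add_emod ((n : ℤ) - β) b
  rw [← hK] at hKe
  have hKr1 : 0 ≤ ((n : ℤ) - β) % b := Int.emod_nonneg _ (by omega)
  have hKr2 : ((n : ℤ) - β) % b < b := Int.emod_lt_of_pos _ (by omega)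
  have hK1 : b * K + β ≤ (n : ℤ) := by omega
  have hK2 : (n : ℤ) + 1 ≤ b * K + b + β := by omega
  have hbT : b * (T : ℤ) ≤ (n : ℤ) := by
    have h1 : 2 * (b * (T : ℤ)) < 2 * ((n : ℤ) + 1) := by linarith
    have h2 : b * (T : ℤ) < (n : ℤ) + 1 := by linarith
    omega
  have hbt : ∀ t : ℕ, t ≤ T → b * (t : ℤ) ≤ (n : ℤ) := by
    intro t ht
    have : b * (t : ℤ) ≤ b * (T : ℤ) :=
      mul_le_mul_of_nonneg_left (by exact_mod_cast ht) (by linarith)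
    linarith
  have hκpos : ∀ t : ℤ, 0 < b * t + β → 0 ≤ t := by
    intro t h
    by_contra hc
    push_neg at hc
    have h2 : t ≤ -1 := by omega
    have h3 : b * t ≤ b * (-1) := mul_le_mul_of_nonneg_left h2 (by linarith)
    linarith
  have main : ∀ t : ℕ, 1 ≤ t → t ≤ T → ∀ h : j - t < (fareyList n).length,
      (fareyList n).get ⟨j - t, h⟩
        = ((a * (K - (t : ℤ) + 1) + α : ℤ) : ℚ) / ((b * (K - (t : ℤ) + 1) + β : ℤ) : ℚ) := by
    intro t
    induction t with
    | zero => omega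
    | succ t ih =>
      intro h1 hle h
      have hc : ((t + 1 : ℕ) : ℤ) = (t : ℤ) + 1 := by push_cast; ring
      rw [hc]
      have hbt1 : b * ((t : ℤ) + 1) ≤ (n : ℤ) := by
        have := hbt (t + 1) hle
        push_cast at this
        linarith
      have hDlb : (n : ℤ) + 1 - b * ((t : ℤ) + 1) ≤ b * (K - ((t : ℤ) + 1) + 1) + β := by
        linarith [hK2]
      have hD2pos : 0 < b * (K - ((t : ℤ) + 1) + 1) + β := by linarith
      have hκ : 0 ≤ K - ((t : ℤ) + 1) + 1 := hκpos _ hD2pos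
      have hN2 : 0 ≤ a * (K - ((t : ℤ) + 1) + 1) + α := by
        have := mul_nonneg (by omega : (0:ℤ) ≤ a) hκ
        linarith
      have hle2 : a * (K - ((t : ℤ) + 1) + 1) + α ≤ b * (K - ((t : ℤ) + 1) + 1) + β := by
        have := mul_le_mul_of_nonneg_right hab hκ
        linarith
      have hD2n : b * (K - ((t : ℤ) + 1) + 1) + β ≤ (n : ℤ) := by
        have hp : 0 ≤ b * (t : ℤ) := mul_nonneg (by linarith) (by positivity)
        linarith [hK1]
      have hco2 : ∃ x y : ℤ, x * (a * (K - ((t : ℤ) + 1) + 1) + α)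
          + y * (b * (K - ((t : ℤ) + 1) + 1) + β) = 1 :=
        ⟨-b, a, by linear_combination -hαβ⟩
      have hidx : j - (t + 1) + 1 = j - t := by omega
      have hi' : j - (t + 1) + 1 < (fareyList n).length := by omega
      rcases Nat.eq_or_lt_of_le h1 with heq | hlt1
      · have ht0 : t = 0 := by omega
        subst ht0
        have hgetj' : (fareyList n).get ⟨j - (0 + 1) + 1, hi'⟩ = ((a : ℚ)) / ((b : ℚ)) := by
          have : (⟨j - (0 + 1) + 1, hi'⟩ : Fin (fareyList n).length) = ⟨j, hj⟩ := by
            simp only [Fin.mk.injEq]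
            omega
          rw [this, hgetj, haq, hbq]
          push_cast
          exact (Rat.num_div_den q).symm
        refine step_pred hi' (N1 := a) (D1 := b) hgetj' (by omega) hD2pos hN2
          ⟨β, -α, by linear_combination -hαβ⟩ hco2 hle2 hD2n ?_ ?_
        · linear_combination -hαβ
        · push_cast
          linarith [hK2]
      · have ht1 : 1 ≤ t := by omega
        have hprev := ih ht1 (by omega) (by omega)
        have hprev' : (fareyList n).get ⟨j - (t + 1) + 1, hi'⟩
            = ((a * (K - (t : ℤ) + 1) + α : ℤ) : ℚ) / ((b * (K - (t : ℤ) + 1) + β : ℤ) : ℚ) := by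
          have : (⟨j - (t + 1) + 1, hi'⟩ : Fin (fareyList n).length)
              = ⟨j - t, by omega⟩ := by
            simp only [Fin.mk.injEq]
            omega
          rw [this, hprev]
        have hD1pos : 0 < b * (K - (t : ℤ) + 1) + β := by
          have h5 : b * (t : ℤ) ≤ (n : ℤ) := hbt t (by omega)
          linarith [hK2]
        have hco1 : ∃ x y : ℤ, x * (a * (K - (t : ℤ) + 1) + α)
            + y * (b * (K - (t : ℤ) + 1) + β) = 1 :=
          ⟨-b, a, by linear_combination -hαβ⟩
        have hmul : b * ((t : ℤ) + 1) ≤ b * (T : ℤ) := by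
          have h6 : ((t + 1 : ℕ) : ℤ) ≤ (T : ℤ) := by exact_mod_cast hle
          push_cast at h6
          exact mul_le_mul_of_nonneg_left (by linarith) (by linarith)
        have hsum : (n : ℤ) < (b * (K - (t : ℤ) + 1) + β)
            + (b * (K - ((t : ℤ) + 1) + 1) + β) := by
          linarith [hK2, hbound, hmul]
        refine step_pred hi' hprev' hD1pos hD2pos hN2 hco1 hco2 hle2 hD2n ?_ hsum
        linear_combination -hαβ
  have hfin := main T hT le_rfl (by omega)
  have hD : 0 < b * (K - (T : ℤ) + 1) + β := by
    linarith [hK2, hbT]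
  have hxy : (-b) * (a * (K - (T : ℤ) + 1) + α) + a * (b * (K - (T : ℤ) + 1) + β) = 1 := by
    linear_combination -hαβ
  rw [hfin, (num_den_div hD hxy).1, (num_den_div hD hxy).2]
  linear_combination -hαβ

lemma endgameR {a b A B : ℤ} (ha : 0 ≤ a) (hb : 1 ≤ b) (hA : 0 ≤ A) (hB : 1 ≤ B)
    (h : A * b - a * B = 1) : 0 ≤ (A - a) * (B - b) := by
  rcases le_or_gt A a with h1 | h1 <;> rcases le_or_gt b B with h2 | h2
  · -- A ≤ a, b ≤ B
    rcases eq_or_lt_of_le h1 with he | h1'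
    · subst he; simp
    rcases eq_or_lt_of_le h2 with he | h2'
    · rw [← he]; simp
    exfalso
    have e1 : A * b ≤ (a - 1) * b := mul_le_mul_of_nonneg_right (by omega) (by omega)
    have e2 : a * (b + 1) ≤ a * B := mul_le_mul_of_nonneg_left (by omega) ha
    nlinarith
  · -- A ≤ a, B < b
    have hx : A - a ≤ 0 := by omega
    have hy : B - b ≤ 0 := by omega
    nlinarith
  · -- a < A, b ≤ B
    exact mul_nonneg (by omega) (by omega)
  · -- a < A, B < b : A*b - a*B ≥ (a+1)b - a(b-1) = a + b ≥ 1 with equality iff a=0,b=1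
    have e1 : (a + 1) * b ≤ A * b := mul_le_mul_of_nonneg_right (by omega) (by omega)
    have e2 : a * B ≤ a * (b - 1) := mul_le_mul_of_nonneg_left (by omega) ha
    have hab1 : a + b ≤ 1 := by nlinarith
    have ha0 : a = 0 := by omega
    have hb1 : b = 1 := by omega
    subst ha0; subst hb1
    omega
  
lemma endgameM {a b Ak Bk Al Bl : ℤ} (ha : 1 ≤ a) (hb : 2 ≤ b)
    (h1 : Al * b - a * Bl = 1) (h2 : a * Bk - Ak * b = 1) :
    0 ≤ (Al - Ak) * (Bl - Bk) := by
  have key : (Al - Ak) * b = 2 + a * (Bl - Bk) := by linear_combination h1 + h2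
  rcases lt_trichotomy Bl Bk with h3 | h3 | h3
  · -- Bl < Bk : a*(Bl-Bk) ≤ -a, so (Al-Ak)*b ≤ 2-a ≤ 1 < 2 ≤ b, hence Al ≤ Ak
    have e1 : a * (Bl - Bk) ≤ a * (-1) := mul_le_mul_of_nonneg_left (by omega) (by omega)
    have hAl : Al - Ak ≤ 0 := by
      by_contra hc
      push_neg at hc
      have : 1 * b ≤ (Al - Ak) * b := mul_le_mul_of_nonneg_right (by omega) (by omega)
      nlinarith
    have hy : Bl - Bk ≤ 0 := by omega
    nlinarith
  · subst h3; simp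
  · -- Bk < Bl : a*(Bl-Bk) ≥ a ≥ 1, so (Al-Ak)*b ≥ 3 > 0, hence Al > Ak
    have e1 : a * 1 ≤ a * (Bl - Bk) := mul_le_mul_of_nonneg_left (by omega) (by omega)
    have hAl : 0 ≤ Al - Ak := by
      by_contra hc
      push_neg at hc
      have : (Al - Ak) * b ≤ 0 * b := mul_le_mul_of_nonneg_right (by omega) (by omega)
      nlinarith
    exact mul_nonneg hAl (by omega)

set_option maxHeartbeats 1000000 in
/-- If `a_k/b_k ≤ a/b ≤ a_l/b_l` are fractions in the Farey sequence of order `n` with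
`k ≤ l` and `l - k ≤ (n + b + 1)/(2b)`, then `a_k/b_k` and `a_l/b_l` are
similarly ordered. -/
theorem farey_similarly_ordered_near_small_denominator (n : ℕ) (hn : 1 ≤ n)
    (k l : Fin (fareyList n).length) (hkl : k ≤ l) (q : ℚ) (hq : q ∈ fareySet n)
    (hqk : (fareyList n).get k ≤ q) (hql : q ≤ (fareyList n).get l)
    (hdist : ((l : ℕ) : ℚ) - ((k : ℕ) : ℚ) ≤ ((n : ℚ) + (q.den : ℚ) + 1) / (2 * (q.den : ℚ))) :
    SimilarlyOrdered ((fareyList n).get k) ((fareyList n).get l) := by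
  obtain ⟨j, hj⟩ := List.mem_iff_get.mp (mem_fareyList.mpr hq)
  have hkj : k ≤ j := by
    rw [← hj] at hqk
    exact farey_get_strictMono.le_iff_le.mp hqk
  have hjl : j ≤ l := by
    rw [← hj] at hql
    exact farey_get_strictMono.le_iff_le.mp hql
  have hkjn : (k : ℕ) ≤ (j : ℕ) := hkj
  have hjln : (j : ℕ) ≤ (l : ℕ) := hjl
  -- the bound, in ℤ
  have hd0 : (0:ℚ) < 2 * (q.den : ℚ) := by
    have := q.pos
    positivity
  have hb1 : (((l : ℕ) : ℚ) - ((k : ℕ) : ℚ)) * (2 * (q.den : ℚ)) ≤ (n : ℚ) + q.den + 1 := by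
    rw [← le_div_iff₀ hd0]
    exact hdist
  have hbZ : 2 * (q.den : ℤ) * (((l : ℕ) - (k : ℕ) : ℕ) : ℤ) ≤ (n : ℤ) + q.den + 1 := by
    have hc : ((((l : ℕ) - (k : ℕ) : ℕ)) : ℚ) = ((l : ℕ) : ℚ) - ((k : ℕ) : ℚ) := by
      have : (k : ℕ) ≤ (l : ℕ) := hkl
      push_cast [Nat.cast_sub this]
      ring
    have h2 : 2 * (q.den : ℚ) * ((((l : ℕ) - (k : ℕ) : ℕ)) : ℚ) ≤ (n : ℚ) + q.den + 1 := by
      rw [hc]; linarith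
    exact_mod_cast h2
  have hboundT : ∀ T : ℕ, T ≤ (l : ℕ) - (k : ℕ) →
      2 * (q.den : ℤ) * (T : ℤ) ≤ (n : ℤ) + q.den + 1 := by
    intro T hTle
    have h3 : (T : ℤ) ≤ (((l : ℕ) - (k : ℕ) : ℕ) : ℤ) := by exact_mod_cast hTle
    have h4 : 2 * (q.den : ℤ) * (T : ℤ) ≤ 2 * (q.den : ℤ) * (((l : ℕ) - (k : ℕ) : ℕ) : ℤ) := by
      apply mul_le_mul_of_nonneg_left h3
      have := q.pos
      omega
    linarith
  -- basic facts
  have hql1 : (fareyList n).get l ≤ 1 := (mem_fareySet_iff.mp (farey_get_mem l)).2.1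
  have hqk0 : 0 ≤ (fareyList n).get k := (mem_fareySet_iff.mp (farey_get_mem k)).1
  rcases Nat.eq_or_lt_of_le hkjn with hkj' | hkj' <;> rcases Nat.eq_or_lt_of_le hjln with hjl' | hjl'
  · -- k = j = l
    have : k = l := Fin.ext (by omega)
    subst this
    unfold SimilarlyOrdered
    simp
  · -- k = j < l : right chain only
    have hkq : (fareyList n).get k = q := by
      rw [← hj]; congr 1; exact Fin.ext hkj'
    have hq1 : q < 1 := by
      have : (fareyList n).get j < (fareyList n).get l :=
        farey_get_strictMono (by rwa [Fin.lt_def])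
      rw [hj] at this
      linarith
    have eqR := chainR hq (T := (l : ℕ) - (j : ℕ)) (by omega)
      (j := (j : ℕ)) (by omega : (j : ℕ) + ((l : ℕ) - (j : ℕ)) < (fareyList n).length)
      hj hq1 (hboundT _ (by omega))
    have hidx : (⟨(j : ℕ) + ((l : ℕ) - (j : ℕ)), by omega⟩ : Fin (fareyList n).length) = l :=
      Fin.ext (by simp; omega)
    rw [hidx] at eqR
    unfold SimilarlyOrdered
    rw [hkq]
    exact endgameR (Rat.num_nonneg.mpr (by rw [← hkq]; exact hqk0))
      (by have := q.pos; omega)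
      (Rat.num_nonneg.mpr (mem_fareySet_iff.mp (farey_get_mem l)).1)
      (by have := ((fareyList n).get l).pos; omega)
      eqR
  · -- k < j = l : left chain only
    have hlq : (fareyList n).get l = q := by
      rw [← hj]; congr 1; exact Fin.ext hjl'.symm
    have hq0 : 0 < q := by
      have : (fareyList n).get k < (fareyList n).get j :=
        farey_get_strictMono (by rwa [Fin.lt_def])
      rw [hj] at this
      linarith
    have eqL := chainL hq (T := (j : ℕ) - (k : ℕ)) (by omega) (by omega)
      (j := (j : ℕ)) j.isLt (by rw [← hj]) hq0 (hboundT _ (by omega))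
    have hidx : (⟨(j : ℕ) - ((j : ℕ) - (k : ℕ)), by omega⟩ : Fin (fareyList n).length) = k :=
      Fin.ext (by simp; omega)
    rw [hidx] at eqL
    unfold SimilarlyOrdered
    rw [hlq]
    exact endgameR
      (Rat.num_nonneg.mpr (mem_fareySet_iff.mp (farey_get_mem k)).1)
      (by have := ((fareyList n).get k).pos; omega)
      (Rat.num_nonneg.mpr (by rw [← hlq]; exact (mem_fareySet_iff.mp (farey_get_mem l)).1))
      (by have := q.pos; omega)
      eqL
  · -- k < j < l : both chains
    have hq0 : 0 < q := by
      have : (fareyList n).get k < (fareyList n).get j :=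
        farey_get_strictMono (by rwa [Fin.lt_def])
      rw [hj] at this
      linarith
    have hq1 : q < 1 := by
      have : (fareyList n).get j < (fareyList n).get l :=
        farey_get_strictMono (by rwa [Fin.lt_def])
      rw [hj] at this
      linarith
    have ha1 : 1 ≤ q.num := Rat.num_pos.mpr hq0
    have hab : q.num < (q.den : ℤ) := num_lt_den_of_lt_one hq1
    have hb2 : 2 ≤ (q.den : ℤ) := by omega
    have eqR := chainR hq (T := (l : ℕ) - (j : ℕ)) (by omega)
      (j := (j : ℕ)) (by omega : (j : ℕ) + ((l : ℕ) - (j : ℕ)) < (fareyList n).length)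
      hj hq1 (hboundT _ (by omega))
    have hidxR : (⟨(j : ℕ) + ((l : ℕ) - (j : ℕ)), by omega⟩ : Fin (fareyList n).length) = l :=
      Fin.ext (by simp; omega)
    rw [hidxR] at eqR
    have eqL := chainL hq (T := (j : ℕ) - (k : ℕ)) (by omega) (by omega)
      (j := (j : ℕ)) j.isLt (by rw [← hj]) hq0 (hboundT _ (by omega))
    have hidxL : (⟨(j : ℕ) - ((j : ℕ) - (k : ℕ)), by omega⟩ : Fin (fareyList n).length) = k :=
      Fin.ext (by simp; omega)
    rw [hidxL] at eqL
    unfold SimilarlyOrdered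
    exact endgameM ha1 hb2 eqR eqL
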